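/- In the local-max peeling process on a graph with n vertices where vertex weights are resampled i.i.d. uniformly in each round (Luby-type analysis), the expected number of edges removed in one round is at least half the current number of edges; hence the process terminates in O(log n) rounds with high probability. -/

import Mathlib

open MeasureTheory ProbabilityTheory
open scoped Classical ENNReal

noncomputable section
set_option linter.unusedSectionVars false
set_option maxHeartbeats 1000000

namespace LubyAux

variable {V : Type*} [Fintype V] [DecidableEq V]
variable {Ω : Type*} [MeasureSpace Ω] [IsProbabilityMeasure (ℙ : Measure Ω)]


lemma joint_law (X : V → Ω → ℝ) (hmeas : ∀ v, Measurable (X v))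
    (hindep : iIndepFun X ℙ)
    (hunif : ∀ v, Measure.map (X v) ℙ = volume.restrict (Set.Ioo (0:ℝ) 1)) :
    Measure.map (fun ω (v : V) => X v ω) ℙ
      = Measure.pi (fun _ : V => volume.restrict (Set.Ioo (0:ℝ) 1)) := by
  have hJ : Measurable (fun ω (v : V) => X v ω) := measurable_pi_lambda _ fun v => hmeas v
  refine (Measure.pi_eq fun s hs => ?_).symm
  rw [Measure.map_apply hJ (MeasurableSet.univ_pi hs)]
  have hset : (fun ω (v : V) => X v ω) ⁻¹' Set.pi Set.univ s
      = ⋂ v ∈ (Finset.univ : Finset V), X v ⁻¹' s v := by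
    ext ω; simp [Set.mem_pi]
  rw [hset, hindep.measure_inter_preimage_eq_mul Finset.univ (fun i _ => hs i)]
  refine Finset.prod_congr rfl fun v _ => ?_
  rw [← hunif v, Measure.map_apply (hmeas v) (hs v)]

lemma forall_erase_swap (S : Finset V) {u w : V} (hu : u ∈ S) (hw : w ∈ S) (x : V → ℝ) :
    (∀ v ∈ S.erase w, x (Equiv.swap u w v) < x u) ↔ ∀ v ∈ S.erase u, x v < x u := by
  constructor
  · intro h v hv
    obtain ⟨hvne, hvS⟩ := Finset.mem_erase.1 hv
    have h1 : Equiv.swap u w v ∈ S := by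
      rcases eq_or_ne v w with rfl | hvw
      · rw [Equiv.swap_apply_right]; exact hu
      · rw [Equiv.swap_apply_of_ne_of_ne hvne hvw]; exact hvS
    have h2 : Equiv.swap u w v ≠ w := by
      intro hc
      have := congrArg (Equiv.swap u w) hc
      rw [Equiv.swap_apply_self, Equiv.swap_apply_right] at this
      exact hvne this
    have := h _ (Finset.mem_erase.2 ⟨h2, h1⟩)
    rwa [Equiv.swap_apply_self] at this
  · intro h v hv
    obtain ⟨hvne, hvS⟩ := Finset.mem_erase.1 hv
    have h1 : Equiv.swap u w v ∈ S := by
      rcases eq_or_ne v u with rfl | hvu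
      · rw [Equiv.swap_apply_left]; exact hw
      · rw [Equiv.swap_apply_of_ne_of_ne hvu hvne]; exact hvS
    have h2 : Equiv.swap u w v ≠ u := by
      intro hc
      have := congrArg (Equiv.swap u w) hc
      rw [Equiv.swap_apply_self, Equiv.swap_apply_left] at this
      exact hvne this
    exact h _ (Finset.mem_erase.2 ⟨h2, h1⟩)

lemma tie_zero (X : V → Ω → ℝ) (hmeas : ∀ v, Measurable (X v))
    (hindep : iIndepFun X ℙ)
    (hunif : ∀ v, Measure.map (X v) ℙ = volume.restrict (Set.Ioo (0:ℝ) 1))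
    {a b : V} (hab : a ≠ b) :
    ℙ {ω | X a ω = X b ω} = 0 := by
  set μ : Measure ℝ := volume.restrict (Set.Ioo (0:ℝ) 1) with hμ
  have hIndep : IndepFun (X a) (X b) ℙ := hindep.indepFun hab
  have hmap : Measure.map (fun ω => (X a ω, X b ω)) ℙ = μ.prod μ := by
    rw [(indepFun_iff_map_prod_eq_prod_map_map (hmeas a).aemeasurable
      (hmeas b).aemeasurable).1 hIndep, hunif a, hunif b]
  have hdiag : MeasurableSet {p : ℝ × ℝ | p.1 = p.2} :=
    measurableSet_eq_fun measurable_fst measurable_snd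
  have hset : {ω | X a ω = X b ω} = (fun ω => (X a ω, X b ω)) ⁻¹' {p | p.1 = p.2} := rfl
  rw [hset, ← Measure.map_apply ((hmeas a).prodMk (hmeas b)) hdiag, hmap,
    Measure.prod_apply hdiag]
  have hfib : ∀ x : ℝ, (Prod.mk x ⁻¹' {p : ℝ × ℝ | p.1 = p.2}) = {x} := by
    intro x; ext y; simp [eq_comm]
  simp [hfib]


lemma prob_max (X : V → Ω → ℝ) (hmeas : ∀ v, Measurable (X v))
    (hindep : iIndepFun X ℙ)
    (hunif : ∀ v, Measure.map (X v) ℙ = volume.restrict (Set.Ioo (0:ℝ) 1))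
    (S : Finset V) (u : V) (hu : u ∈ S) :
    ℙ {ω | ∀ v ∈ S.erase u, X v ω < X u ω} = (S.card : ℝ≥0∞)⁻¹ := by
  set μ : Measure ℝ := volume.restrict (Set.Ioo (0:ℝ) 1) with hμ
  set π : Measure (V → ℝ) := Measure.pi (fun _ : V => μ) with hπdef
  have hπ : Measure.map (fun ω (v : V) => X v ω) ℙ = π := joint_law X hmeas hindep hunif
  have hJmeas : Measurable (fun ω (v : V) => X v ω) := measurable_pi_lambda _ fun v => hmeas v
  have hMset : ∀ w : V, MeasurableSet {x : V → ℝ | ∀ v ∈ S.erase w, x v < x w} := by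
    intro w
    have : {x : V → ℝ | ∀ v ∈ S.erase w, x v < x w}
        = ⋂ v ∈ (S.erase w : Finset V), {x : V → ℝ | x v < x w} := by
      ext x; simp
    rw [this]
    exact (S.erase w).measurableSet_biInter fun v _ =>
      measurableSet_lt (measurable_pi_apply v) (measurable_pi_apply w)
  have hEmeas : ∀ w : V, MeasurableSet {ω | ∀ v ∈ S.erase w, X v ω < X w ω} := by
    intro w
    have : {ω | ∀ v ∈ S.erase w, X v ω < X w ω}
        = (fun ω (v : V) => X v ω) ⁻¹' {x : V → ℝ | ∀ v ∈ S.erase w, x v < x w} := rfl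
    rw [this]; exact hJmeas (hMset w)
  have hprob : ∀ w : V, ℙ {ω | ∀ v ∈ S.erase w, X v ω < X w ω}
      = π {x : V → ℝ | ∀ v ∈ S.erase w, x v < x w} := by
    intro w
    rw [← hπ, Measure.map_apply hJmeas (hMset w)]
    rfl
  -- symmetry
  have heq : ∀ w ∈ S, ℙ {ω | ∀ v ∈ S.erase w, X v ω < X w ω}
      = ℙ {ω | ∀ v ∈ S.erase u, X v ω < X u ω} := by
    intro w hw
    rw [hprob w, hprob u]
    have hmp := measurePreserving_piCongrLeft (μ := fun _ : V => μ)
      (α := fun _ : V => ℝ) (Equiv.swap u w)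
    have hpre := hmp.measure_preimage (hMset w).nullMeasurableSet
    have hset : (MeasurableEquiv.piCongrLeft (fun _ : V => ℝ) (Equiv.swap u w))
        ⁻¹' {x : V → ℝ | ∀ v ∈ S.erase w, x v < x w}
        = {x : V → ℝ | ∀ v ∈ S.erase u, x v < x u} := by
      ext x
      have happ : ∀ v : V,
          (MeasurableEquiv.piCongrLeft (fun _ : V => ℝ) (Equiv.swap u w)) x v
            = x (Equiv.swap u w v) := by
        intro v
        conv_lhs => rw [show v = (Equiv.swap u w) ((Equiv.swap u w).symm v) by simp]
        rw [MeasurableEquiv.piCongrLeft_apply_apply]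
        rw [Equiv.symm_swap]
      simp only [Set.mem_preimage, Set.mem_setOf_eq, happ, Equiv.swap_apply_right]
      exact forall_erase_swap S hu hw x
    rw [← hset, hpre]
  -- disjointness
  have hdisj : (↑S : Set V).PairwiseDisjoint
      (fun w => {ω | ∀ v ∈ S.erase w, X v ω < X w ω}) := by
    intro a ha b hb hab
    refine Set.disjoint_left.2 fun ω hωa hωb => ?_
    have h1 : X b ω < X a ω := hωa b (Finset.mem_erase.2 ⟨fun h => hab h.symm, hb⟩)
    have h2 : X a ω < X b ω := hωb a (Finset.mem_erase.2 ⟨hab, ha⟩)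
    exact absurd h2 (asymm h1)
  -- union has full measure
  have hunion : ℙ (⋃ w ∈ S, {ω | ∀ v ∈ S.erase w, X v ω < X w ω}) = 1 := by
    have hS : S.Nonempty := ⟨u, hu⟩
    refine le_antisymm prob_le_one ?_
    set T : Set Ω := ⋃ a ∈ S, ⋃ b ∈ S.erase a, {ω | X a ω = X b ω} with hT
    have hT0 : ℙ T = 0 := by
      rw [hT]
      refine measure_biUnion_null_iff S.countable_toSet |>.2 fun a ha => ?_
      refine measure_biUnion_null_iff (S.erase a).countable_toSet |>.2 fun b hb => ?_
      exact tie_zero X hmeas hindep hunif (Finset.mem_erase.1 hb).1.symm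
    have hcover : (Set.univ : Set Ω)
        ⊆ (⋃ w ∈ S, {ω | ∀ v ∈ S.erase w, X v ω < X w ω}) ∪ T := by
      intro ω _
      obtain ⟨a, haS, hmax⟩ := S.exists_max_image (fun v => X v ω) hS
      by_cases hstrict : ∀ b ∈ S.erase a, X b ω < X a ω
      · exact Or.inl (Set.mem_biUnion haS hstrict)
      · push_neg at hstrict
        obtain ⟨b, hb, hble⟩ := hstrict
        refine Or.inr (Set.mem_biUnion haS (Set.mem_biUnion hb ?_))
        exact le_antisymm hble (hmax b (Finset.mem_erase.1 hb).2)
    calc (1 : ℝ≥0∞) = ℙ (Set.univ : Set Ω) := (measure_univ).symm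
      _ ≤ ℙ ((⋃ w ∈ S, {ω | ∀ v ∈ S.erase w, X v ω < X w ω}) ∪ T) := measure_mono hcover
      _ ≤ ℙ (⋃ w ∈ S, {ω | ∀ v ∈ S.erase w, X v ω < X w ω}) + ℙ T := measure_union_le _ _
      _ = ℙ (⋃ w ∈ S, {ω | ∀ v ∈ S.erase w, X v ω < X w ω}) := by rw [hT0, add_zero]
  have hsum : ∑ w ∈ S, ℙ {ω | ∀ v ∈ S.erase w, X v ω < X w ω} = 1 := by
    rw [← measure_biUnion_finset hdisj fun w _ => hEmeas w]; exact hunion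
  rw [Finset.sum_congr rfl heq, Finset.sum_const] at hsum
  have hc0 : (S.card : ℝ≥0∞) ≠ 0 := by
    simp [Finset.card_ne_zero_of_mem hu]
  have hctop : (S.card : ℝ≥0∞) ≠ ⊤ := ENNReal.natCast_ne_top _
  have := congrArg (fun t => (S.card : ℝ≥0∞)⁻¹ * t) hsum
  simp only [nsmul_eq_mul, ← mul_assoc, ENNReal.inv_mul_cancel hc0 hctop, one_mul, mul_one]
    at this
  exact this


end LubyAux

open scoped Classical in
/-- Luby-type lemma: with fresh i.i.d. uniform vertex weights, in one round of
local-max selection (selected vertices and their neighbors are removed, with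
all incident edges), the expected number of removed edges is at least half the
current number of edges. -/
theorem luby_expected_removed_edges {V : Type*} [Fintype V] [DecidableEq V]
    (G : SimpleGraph V) [DecidableRel G.Adj]
    {Ω : Type*} [MeasureSpace Ω] [IsProbabilityMeasure (ℙ : Measure Ω)]
    (X : V → Ω → ℝ) (hmeas : ∀ v, Measurable (X v))
    (hindep : iIndepFun X ℙ)
    (hunif : ∀ v, Measure.map (X v) ℙ = volume.restrict (Set.Ioo (0:ℝ) 1)) :
    (G.edgeFinset.card : ℝ) / 2 ≤
      ∫ ω, ((G.edgeFinset.filter (fun e =>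
        ∃ v, v ∈ e ∧ ((∀ u ∈ G.neighborFinset v, X u ω < X v ω) ∨
          ∃ u, G.Adj v u ∧
            ∀ w ∈ G.neighborFinset u, X w ω < X u ω))).card : ℝ) ∂ℙ := by
  classical
  set d : V → ℕ := fun v => G.degree v with hd
  set pred : Sym2 V → Ω → Prop := fun e ω => ∃ v, v ∈ e ∧
      ((∀ u ∈ G.neighborFinset v, X u ω < X v ω) ∨
        ∃ u, G.Adj v u ∧ ∀ w ∈ G.neighborFinset u, X w ω < X u ω) with hpred
  set F : Ω → ℝ := fun ω => ((G.edgeFinset.filter (fun e => pred e ω)).card : ℝ) with hF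
  show (G.edgeFinset.card : ℝ) / 2 ≤ ∫ ω, F ω ∂ℙ
  -- measurability of local-max events
  have hL : ∀ v : V, MeasurableSet {ω | ∀ u ∈ G.neighborFinset v, X u ω < X v ω} := by
    intro v
    have : {ω | ∀ u ∈ G.neighborFinset v, X u ω < X v ω}
        = ⋂ u ∈ G.neighborFinset v, {ω | X u ω < X v ω} := by ext ω; simp
    rw [this]
    exact (G.neighborFinset v).measurableSet_biInter fun u _ =>
      measurableSet_lt (hmeas u) (hmeas v)
  have hRem : ∀ e : Sym2 V, MeasurableSet {ω | pred e ω} := by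
    intro e
    have : {ω | pred e ω} = ⋃ v, ⋃ (_ : v ∈ e),
        ({ω | ∀ u ∈ G.neighborFinset v, X u ω < X v ω} ∪
          ⋃ u, ⋃ (_ : G.Adj v u), {ω | ∀ w ∈ G.neighborFinset u, X w ω < X u ω}) := by
      ext ω
      simp only [hpred, Set.mem_iUnion, Set.mem_union, Set.mem_setOf_eq]
      constructor
      · rintro ⟨v, hv, h | ⟨u, hu, h⟩⟩
        · exact ⟨v, hv, Or.inl h⟩
        · exact ⟨v, hv, Or.inr ⟨u, hu, h⟩⟩
      · rintro ⟨v, hv, h | ⟨u, hu, h⟩⟩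
        · exact ⟨v, hv, Or.inl h⟩
        · exact ⟨v, hv, Or.inr ⟨u, hu, h⟩⟩
    rw [this]
    exact MeasurableSet.iUnion fun v => MeasurableSet.iUnion fun _ =>
      (hL v).union (MeasurableSet.iUnion fun u => MeasurableSet.iUnion fun _ => hL u)
  -- directed edges
  set D : Finset (V × V) := Finset.univ.filter (fun p => G.Adj p.1 p.2) with hD
  set S : V × V → Finset V := fun p => G.neighborFinset p.1 ∪ G.neighborFinset p.2 with hS
  set Bset : V × V → Set Ω :=
    fun p => {ω | ∀ w ∈ (S p).erase p.1, X w ω < X p.1 ω} with hBset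
  have hBmeas : ∀ p : V × V, MeasurableSet (Bset p) := by
    intro p
    have : Bset p = ⋂ w ∈ (S p).erase p.1, {ω | X w ω < X p.1 ω} := by
      ext ω; simp [hBset]
    rw [this]
    exact ((S p).erase p.1).measurableSet_biInter fun w _ =>
      measurableSet_lt (hmeas w) (hmeas p.1)
  have hBprob : ∀ p ∈ D, ℙ (Bset p) = (((S p).card : ℝ≥0∞))⁻¹ := by
    intro p hp
    have hadj : G.Adj p.1 p.2 := (Finset.mem_filter.1 hp).2
    exact LubyAux.prob_max X hmeas hindep hunif (S p) p.1
      (Finset.mem_union_right _ ((G.mem_neighborFinset _ _).2 hadj.symm))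
  -- pointwise counting inequality
  have key : ∀ ω : Ω, ∑ p ∈ D.filter (fun p => ω ∈ Bset p), d p.2
      ≤ 2 * (G.edgeFinset.filter (fun e => pred e ω)).card := by
    intro ω
    set A : Finset (V × V) := D.filter (fun p => ω ∈ Bset p) with hA
    set Rm : Finset (Sym2 V) := G.edgeFinset.filter (fun e => pred e ω) with hRm
    have hinj : ∀ p ∈ A, ∀ q ∈ A, p.2 = q.2 → p = q := by
      intro p hp q hq hpq
      obtain ⟨hpD, hpB⟩ := Finset.mem_filter.1 hp
      obtain ⟨hqD, hqB⟩ := Finset.mem_filter.1 hq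
      have hpadj : G.Adj p.1 p.2 := (Finset.mem_filter.1 hpD).2
      have hqadj : G.Adj q.1 q.2 := (Finset.mem_filter.1 hqD).2
      by_cases h1 : p.1 = q.1
      · exact Prod.ext h1 hpq
      · exfalso
        have hq1 : q.1 ∈ (S p).erase p.1 := by
          refine Finset.mem_erase.2 ⟨fun hc => h1 hc.symm, ?_⟩
          exact Finset.mem_union_right _
            ((G.mem_neighborFinset _ _).2 (hpq ▸ hqadj.symm))
        have hp1 : p.1 ∈ (S q).erase q.1 := by
          refine Finset.mem_erase.2 ⟨h1, ?_⟩
          exact Finset.mem_union_right _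
            ((G.mem_neighborFinset _ _).2 (hpq ▸ hpadj.symm))
        exact absurd (hqB p.1 hp1) (asymm (hpB q.1 hq1))
    have himage : ∑ p ∈ A, d p.2 = ∑ v ∈ A.image Prod.snd, d v :=
      (Finset.sum_image hinj).symm
    have hdom : ∀ v ∈ A.image Prod.snd, G.incidenceFinset v ⊆ Rm := by
      intro v hv e he
      obtain ⟨p, hpA, hpv⟩ := Finset.mem_image.1 hv
      obtain ⟨hpD, hpB⟩ := Finset.mem_filter.1 hpA
      have hpadj : G.Adj p.1 p.2 := (Finset.mem_filter.1 hpD).2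
      rw [SimpleGraph.mem_incidenceFinset] at he
      obtain ⟨heE, hve⟩ := he
      refine Finset.mem_filter.2 ⟨SimpleGraph.mem_edgeFinset.2 heE, ?_⟩
      refine ⟨v, hve, Or.inr ⟨p.1, ?_, ?_⟩⟩
      · exact hpv ▸ hpadj.symm
      · intro w hw
        have hadjw : G.Adj p.1 w := (G.mem_neighborFinset _ _).1 hw
        refine hpB w (Finset.mem_erase.2 ⟨(G.ne_of_adj hadjw).symm, ?_⟩)
        exact Finset.mem_union_left _ hw
    have hstep : ∀ v ∈ A.image Prod.snd, d v ≤ (Rm.filter (fun e => v ∈ e)).card := by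
      intro v hv
      show G.degree v ≤ _
      rw [← SimpleGraph.card_incidenceFinset_eq_degree]
      refine Finset.card_le_card fun e he => ?_
      refine Finset.mem_filter.2 ⟨hdom v hv he, ?_⟩
      rw [SimpleGraph.mem_incidenceFinset] at he
      exact he.2
    have hdouble : ∑ v ∈ A.image Prod.snd, (Rm.filter (fun e => v ∈ e)).card
        = ∑ e ∈ Rm, ((A.image Prod.snd).filter (fun v => v ∈ e)).card := by
      simp only [Finset.card_filter]
      exact Finset.sum_comm
    have hcard2 : ∀ e : Sym2 V, ((A.image Prod.snd).filter (fun v => v ∈ e)).card ≤ 2 := by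
      intro e
      induction e using Sym2.ind with
      | _ a b =>
        have hsub : (A.image Prod.snd).filter (fun v => v ∈ (s(a, b) : Sym2 V))
            ⊆ {a, b} := by
          intro v hv
          have := (Finset.mem_filter.1 hv).2
          rw [Sym2.mem_iff] at this
          rcases this with rfl | rfl
          · exact Finset.mem_insert_self _ _
          · exact Finset.mem_insert_of_mem (Finset.mem_singleton_self _)
        calc ((A.image Prod.snd).filter (fun v => v ∈ (s(a, b) : Sym2 V))).card
            ≤ ({a, b} : Finset V).card := Finset.card_le_card hsub
          _ ≤ 2 := (Finset.card_insert_le _ _).trans (by simp)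
    calc ∑ p ∈ A, d p.2 = ∑ v ∈ A.image Prod.snd, d v := himage
      _ ≤ ∑ v ∈ A.image Prod.snd, (Rm.filter (fun e => v ∈ e)).card :=
          Finset.sum_le_sum hstep
      _ = ∑ e ∈ Rm, ((A.image Prod.snd).filter (fun v => v ∈ e)).card := hdouble
      _ ≤ ∑ _e ∈ Rm, 2 := Finset.sum_le_sum fun e _ => hcard2 e
      _ = 2 * Rm.card := by rw [Finset.sum_const, smul_eq_mul, mul_comm]
  -- the auxiliary function g
  set g : Ω → ℝ :=
    fun ω => ∑ p ∈ D, (Bset p).indicator (fun _ => (d p.2 : ℝ)) ω with hg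
  have hgval : ∀ ω, g ω = ((∑ p ∈ D.filter (fun p => ω ∈ Bset p), d p.2 : ℕ) : ℝ) := by
    intro ω
    rw [hg, Nat.cast_sum]
    conv_rhs => rw [Finset.sum_filter]
    refine Finset.sum_congr rfl fun p _ => ?_
    by_cases h : ω ∈ Bset p <;> simp [Set.indicator_apply, h]
  have hFval : ∀ ω, F ω = ∑ e ∈ G.edgeFinset,
      Set.indicator {ω' | pred e ω'} (fun _ => (1:ℝ)) ω := by
    intro ω
    show ((G.edgeFinset.filter (fun e => pred e ω)).card : ℝ) = _
    rw [Finset.card_filter]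
    push_cast
    refine Finset.sum_congr rfl fun e _ => ?_
    by_cases h : pred e ω <;> simp [Set.indicator_apply, h]
  have hgF : ∀ ω, g ω ≤ 2 * F ω := by
    intro ω
    rw [hgval ω, hF]
    have := key ω
    calc ((∑ p ∈ D.filter (fun p => ω ∈ Bset p), d p.2 : ℕ) : ℝ)
        ≤ ((2 * (G.edgeFinset.filter (fun e => pred e ω)).card : ℕ) : ℝ) :=
          Nat.cast_le.2 this
      _ = 2 * ((G.edgeFinset.filter (fun e => pred e ω)).card : ℝ) := by push_cast; ring
  -- integrability
  have hgint : Integrable g ℙ := by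
    rw [hg]
    exact integrable_finset_sum _ fun p _ => (integrable_const _).indicator (hBmeas p)
  have hFint : Integrable F ℙ := by
    have : F = fun ω => ∑ e ∈ G.edgeFinset,
        Set.indicator {ω' | pred e ω'} (fun _ => (1:ℝ)) ω := funext hFval
    rw [this]
    exact integrable_finset_sum _ fun e _ => (integrable_const _).indicator (hRem e)
  -- integral of g
  have hgint_eq : ∫ ω, g ω ∂ℙ = ∑ p ∈ D, (ℙ (Bset p)).toReal • (d p.2 : ℝ) := by
    rw [hg, integral_finset_sum _ fun p _ => (integrable_const _).indicator (hBmeas p)]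
    exact Finset.sum_congr rfl fun p _ => integral_indicator_const _ (hBmeas p)
  -- lower bound per term
  have hterm : ∀ p ∈ D, ((d p.1 + d p.2 : ℝ))⁻¹ * (d p.2 : ℝ)
      ≤ (ℙ (Bset p)).toReal • (d p.2 : ℝ) := by
    intro p hp
    have hadj : G.Adj p.1 p.2 := (Finset.mem_filter.1 hp).2
    have hcard_le : (S p).card ≤ d p.1 + d p.2 := by
      refine (Finset.card_union_le _ _).trans ?_
      simp only [hd]
      simp [SimpleGraph.card_neighborFinset_eq_degree]
    have hcard_pos : 0 < (S p).card := by
      refine Finset.card_pos.2 ⟨p.1, ?_⟩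
      exact Finset.mem_union_right _ ((G.mem_neighborFinset _ _).2 hadj.symm)
    have htoReal : (ℙ (Bset p)).toReal = (((S p).card : ℝ))⁻¹ := by
      rw [hBprob p hp, ENNReal.toReal_inv]
      norm_num
    rw [htoReal, smul_eq_mul]
    refine mul_le_mul_of_nonneg_right ?_ (by positivity)
    refine inv_anti₀ ?_ ?_
    · exact_mod_cast hcard_pos
    · exact_mod_cast hcard_le
  -- sum identity
  have hDcard : D.card = 2 * G.edgeFinset.card := by
    have hfib : D.card = ∑ u : V, (D.filter (fun p => p.1 = u)).card :=
      Finset.card_eq_sum_card_fiberwise fun p _ => Finset.mem_univ p.1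
    have hfibcard : ∀ u : V, (D.filter (fun p => p.1 = u)).card = d u := by
      intro u
      have : D.filter (fun p => p.1 = u)
          = (G.neighborFinset u).image (fun w => (u, w)) := by
        ext ⟨a, b⟩
        simp only [hD, Finset.mem_filter, Finset.mem_univ, true_and, Finset.mem_image,
          SimpleGraph.mem_neighborFinset, Prod.mk.injEq]
        constructor
        · rintro ⟨hadj, rfl⟩; exact ⟨b, hadj, rfl, rfl⟩
        · rintro ⟨w, hadj, rfl, rfl⟩; exact ⟨hadj, rfl⟩
      rw [this, Finset.card_image_of_injective _ (fun a b h => (Prod.ext_iff.1 h).2)]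
      simp only [hd]
      exact SimpleGraph.card_neighborFinset_eq_degree _ _
    rw [hfib]
    simp only [hfibcard]
    exact SimpleGraph.sum_degrees_eq_twice_card_edges G
  have hdenom_ne : ∀ p ∈ D, ((d p.1 + d p.2 : ℝ)) ≠ 0 := by
    intro p hp
    have hadj : G.Adj p.1 p.2 := (Finset.mem_filter.1 hp).2
    have : 0 < d p.1 := by
      simp only [hd]
      exact (G.degree_pos_iff_exists_adj p.1).2 ⟨p.2, hadj⟩
    positivity
  have hswapmem : ∀ p ∈ D, p.swap ∈ D := by
    intro p hp
    exact Finset.mem_filter.2 ⟨Finset.mem_univ _, ((Finset.mem_filter.1 hp).2).symm⟩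
  have hsumswap : ∑ p ∈ D, ((d p.1 + d p.2 : ℝ))⁻¹ * (d p.2 : ℝ)
      = ∑ p ∈ D, ((d p.2 + d p.1 : ℝ))⁻¹ * (d p.1 : ℝ) := by
    refine Finset.sum_bij' (fun p _ => p.swap) (fun p _ => p.swap)
      (fun p hp => hswapmem p hp) (fun p hp => hswapmem p hp)
      (fun p _ => Prod.swap_swap p) (fun p _ => Prod.swap_swap p) ?_
    intro p hp
    simp [Prod.swap]
  have hsumI : ∑ p ∈ D, ((d p.1 + d p.2 : ℝ))⁻¹ * (d p.2 : ℝ)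
      = (G.edgeFinset.card : ℝ) := by
    have h2 : (2 : ℝ) * ∑ p ∈ D, ((d p.1 + d p.2 : ℝ))⁻¹ * (d p.2 : ℝ)
        = ∑ p ∈ D, (1 : ℝ) := by
      rw [two_mul]
      nth_rewrite 2 [hsumswap]
      rw [← Finset.sum_add_distrib]
      refine Finset.sum_congr rfl fun p hp => ?_
      have h := hdenom_ne p hp
      have h' : ((d p.2 : ℝ) + (d p.1 : ℝ)) ≠ 0 := by rw [add_comm]; exact h
      field_simp
      ring
    have h3 : ∑ p ∈ D, (1 : ℝ) = (D.card : ℝ) := by simp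
    have h4 : (D.card : ℝ) = 2 * (G.edgeFinset.card : ℝ) := by
      rw [hDcard]; push_cast; ring
    have := h2.trans (h3.trans h4)
    linarith
  -- final assembly
  have hlow : (G.edgeFinset.card : ℝ) ≤ ∫ ω, g ω ∂ℙ := by
    rw [hgint_eq, ← hsumI]
    exact Finset.sum_le_sum hterm
  have hup : ∫ ω, g ω ∂ℙ ≤ 2 * ∫ ω, F ω ∂ℙ := by
    have h1 : ∫ ω, g ω ∂ℙ ≤ ∫ ω, 2 * F ω ∂ℙ :=
      integral_mono hgint (hFint.const_mul 2) hgF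
    rwa [integral_const_mul] at h1
  linarith

end
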